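/- For all n ≥ 3, |A_n| = ((n−1)/(n−2)) · |A_{n-1}| · |A_{n-2}|, equivalently (n−2)|A_n| = (n−1)|A_{n-1}||A_{n-2}|, with |A_1| = |A_2| = 1. -/
import Mathlib


/-- Sets of inflated random Fibonacci words: A₁ = {0}, A₂ = {1},
    Aₙ = Aₙ₋₁Aₙ₋₂ ∪ Aₙ₋₂Aₙ₋₁ for n ≥ 3 (A₀ = ∅). -/
def wordSet : ℕ → Set (List Bool)
  | 0 => ∅
  | 1 => {[false]}
  | 2 => {[true]}
  | (n + 3) => Set.image2 (· ++ ·) (wordSet (n + 2)) (wordSet (n + 1)) ∪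
      Set.image2 (· ++ ·) (wordSet (n + 1)) (wordSet (n + 2))

/-- Concatenation of sets of words: UV = {uv : u ∈ U, v ∈ V}. -/
def cat (U V : Set (List Bool)) : Set (List Bool) := Set.image2 (· ++ ·) U V

/-- W[a,b]: the set of segments wₐ…w_b (1-based indexing) of words in W. -/
def seg (W : Set (List Bool)) (a b : ℕ) : Set (List Bool) :=
  (fun w => (w.drop (a - 1)).take (b - a + 1)) '' W

/-- F(S, m): the set of all contiguous factors of length m of words in S. -/
def factorSet (S : Set (List Bool)) (m : ℕ) : Set (List Bool) :=
  {x | x.length = m ∧ ∃ w ∈ S, x <:+: w}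

/-- Fₙ: the set of factors of length fₙ occurring in any inflated word. -/
def Fn (n : ℕ) : Set (List Bool) := ⋃ m ≥ 1, factorSet (wordSet m) (Nat.fib n)

/-! ### Auxiliary lemmas -/

/-- Every word in `wordSet n` has length `fib n`. -/
lemma wordSet_length : ∀ n, ∀ w ∈ wordSet n, w.length = Nat.fib n
  | 0 => by simp [wordSet]
  | 1 => by rintro w rfl; simp
  | 2 => by rintro w rfl; simp
  | (n + 3) => by
    have e1 : Nat.fib (n + 3) = Nat.fib (n + 1) + Nat.fib (n + 2) :=
      Nat.fib_add_two (n := n + 1)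
    rintro w (⟨a, ha, b, hb, rfl⟩ | ⟨a, ha, b, hb, rfl⟩) <;>
      simp only [List.length_append,
        wordSet_length _ _ ha, wordSet_length _ _ hb] <;> omega

lemma wordSet_finite : ∀ n, (wordSet n).Finite
  | 0 => by simp [wordSet]
  | 1 => Set.finite_singleton _
  | 2 => Set.finite_singleton _
  | (n + 3) =>
    Set.Finite.union
      (Set.Finite.image2 _ (wordSet_finite (n + 2)) (wordSet_finite (n + 1)))
      (Set.Finite.image2 _ (wordSet_finite (n + 1)) (wordSet_finite (n + 2)))

/-- A splitting helper for two factorizations of a word. -/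
lemma split_helper {p q b a : List Bool} (h : p ++ q = b ++ a)
    (hl : b.length ≤ p.length) : ∃ c, p = b ++ c ∧ a = c ++ q := by
  rcases List.append_eq_append_iff.1 h with ⟨c, hc1, hc2⟩ | ⟨c, hc1, hc2⟩
  · -- hc1 : b = p ++ c, hc2 : q = c ++ a
    have hlc : c.length = 0 := by
      have := congrArg List.length hc1
      simp only [List.length_append] at this
      omega
    have hc0 : c = [] := List.length_eq_zero_iff.1 hlc
    subst hc0
    simp only [List.append_nil] at hc1
    simp only [List.nil_append] at hc2
    exact ⟨[], by simp [hc1], by simp [hc2]⟩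
  · -- hc1 : p = b ++ c, hc2 : a = c ++ q
    exact ⟨c, hc1, hc2⟩

/-- Cancellation: if `p ++ q ∈ A (n+2)` and one factor is a word of the
    appropriate level, so is the other. -/
lemma wordSet_cancel : ∀ n : ℕ,
    (∀ p q, p ++ q ∈ wordSet (n + 2) → p ∈ wordSet (n + 1) → q ∈ wordSet n) ∧
    (∀ p q, p ++ q ∈ wordSet (n + 2) → p ∈ wordSet n → q ∈ wordSet (n + 1)) := by
  intro n
  induction n with
  | zero =>
    constructor
    · rintro p q hpq rfl
      simp only [wordSet, Set.mem_singleton_iff] at hpq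
      exact absurd (congrArg (fun l => l.head?) hpq) (by simp)
    · rintro p q hpq hp
      simp [wordSet] at hp
  | succ n ih =>
    obtain ⟨ih1, ih3⟩ := ih
    have hfib : Nat.fib (n + 1) ≤ Nat.fib (n + 2) := Nat.fib_mono (by omega)
    constructor
    · -- p ∈ A (n+2), p ++ q ∈ A (n+3) ⟹ q ∈ A (n+1)
      rintro p q (⟨a, ha, b, hb, hab⟩ | ⟨b, hb, a, ha, hab⟩) hp
      · -- a ∈ A(n+2), b ∈ A(n+1), a ++ b = p ++ q
        replace hab : a ++ b = p ++ q := hab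
        have hlen : a.length = p.length := by
          rw [wordSet_length _ _ ha, wordSet_length _ _ hp]
        obtain ⟨rfl, rfl⟩ := List.append_inj hab hlen
        exact hb
      · -- b ∈ A(n+1), a ∈ A(n+2), b ++ a = p ++ q
        replace hab : p ++ q = b ++ a := hab.symm
        have hlb : b.length ≤ p.length := by
          rw [wordSet_length _ _ hb, wordSet_length _ _ hp]; exact hfib
        obtain ⟨c, hc1, hc2⟩ := split_helper hab hlb
        have hc : c ∈ wordSet n := ih1 b c (hc1 ▸ hp) hb
        exact ih3 c q (hc2 ▸ ha) hc
    · -- p ∈ A (n+1), p ++ q ∈ A (n+3) ⟹ q ∈ A (n+2)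
      rintro p q (⟨a, ha, b, hb, hab⟩ | ⟨b, hb, a, ha, hab⟩) hp
      · -- a ∈ A(n+2), b ∈ A(n+1), a ++ b = p ++ q
        replace hab : a ++ b = p ++ q := hab
        have hlp : p.length ≤ a.length := by
          rw [wordSet_length _ _ ha, wordSet_length _ _ hp]; exact hfib
        obtain ⟨c, hc1, hc2⟩ := split_helper hab hlp
        -- hc1 : a = p ++ c, hc2 : q = c ++ b
        have hc : c ∈ wordSet n := ih1 p c (hc1 ▸ ha) hp
        rw [hc2]
        match n, hc, hb with
        | (m + 1), hc, hb =>
          exact Or.inr ⟨_, hc, _, hb, rfl⟩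
      · -- b ∈ A(n+1), a ∈ A(n+2), b ++ a = p ++ q
        replace hab : b ++ a = p ++ q := hab
        have hlen : b.length = p.length := by
          rw [wordSet_length _ _ hb, wordSet_length _ _ hp]
        obtain ⟨rfl, rfl⟩ := List.append_inj hab hlen
        exact ha

/-- The key intersection identity:
    `A(n+2)·A(n+1) ∩ A(n+1)·A(n+2) = A(n+1)·(A n · A(n+1))`. -/
lemma wordSet_inter (n : ℕ) :
    Set.image2 (· ++ ·) (wordSet (n + 2)) (wordSet (n + 1)) ∩
      Set.image2 (· ++ ·) (wordSet (n + 1)) (wordSet (n + 2)) =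
    Set.image2 (· ++ ·) (wordSet (n + 1))
      (Set.image2 (· ++ ·) (wordSet n) (wordSet (n + 1))) := by
  apply Set.Subset.antisymm
  · rintro w ⟨⟨u, hu, v, hv, huv⟩, ⟨v', hv', u', hu', h⟩⟩
    replace huv : u ++ v = w := huv
    replace h : u ++ v = v' ++ u' := by rw [huv]; exact h.symm
    have hlv' : v'.length ≤ u.length := by
      rw [wordSet_length _ _ hv', wordSet_length _ _ hu]
      exact Nat.fib_mono (by omega)
    obtain ⟨r, hr1, hr2⟩ := split_helper h hlv'
    -- hr1 : u = v' ++ r, hr2 : u' = r ++ v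
    have hr : r ∈ wordSet n := (wordSet_cancel n).1 v' r (hr1 ▸ hu) hv'
    refine ⟨v', hv', r ++ v, ⟨r, hr, v, hv, rfl⟩, ?_⟩
    show v' ++ (r ++ v) = w
    rw [← huv, hr1]; simp
  · rintro w ⟨x, hx, yz, ⟨y, hy, z, hz, hyz⟩, hw⟩
    replace hyz : y ++ z = yz := hyz
    replace hw : x ++ yz = w := hw
    subst hyz; subst hw
    constructor
    · refine ⟨x ++ y, ?_, z, hz, by simp⟩
      match n, hx, hy with
      | (m + 1), hx, hy => exact Or.inl ⟨_, hx, _, hy, rfl⟩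
      | 0, hx, hy => simp [wordSet] at hy
    · refine ⟨x, hx, y ++ z, ?_, rfl⟩
      match n, hy, hz with
      | (m + 1), hy, hz => exact Or.inr ⟨_, hy, _, hz, rfl⟩
      | 0, hy, hz => simp [wordSet] at hy

/-- Cardinality of a concatenation set, when all left factors have the
    same length. -/
lemma ncard_image2_append {U V : Set (List Bool)} (L : ℕ)
    (hU : U.Finite) (hV : V.Finite) (hlen : ∀ u ∈ U, u.length = L) :
    (Set.image2 (· ++ ·) U V).ncard = U.ncard * V.ncard := by
  rw [← Set.image_prod]
  have hinj : Set.InjOn (fun x : List Bool × List Bool => x.1 ++ x.2) (U ×ˢ V) := by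
    rintro ⟨u1, v1⟩ ⟨hu1, hv1⟩ ⟨u2, v2⟩ ⟨hu2, hv2⟩ h
    simp only at h
    obtain ⟨h1, h2⟩ := List.append_inj h
      (by rw [hlen u1 hu1, hlen u2 hu2])
    simp_all
  rw [Set.ncard_image_of_injOn hinj, ← Nat.card_coe_set_eq,
    Nat.card_congr (Equiv.Set.prod U V), Nat.card_prod,
    Nat.card_coe_set_eq, Nat.card_coe_set_eq]

/-- The central counting identity:
    `a(n+3) + a(n+1)² · a n = 2 · a(n+2) · a(n+1)`. -/
lemma wordSet_ncard_rec (n : ℕ) :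
    (wordSet (n + 3)).ncard +
      (wordSet (n + 1)).ncard * ((wordSet n).ncard * (wordSet (n + 1)).ncard) =
    2 * ((wordSet (n + 2)).ncard * (wordSet (n + 1)).ncard) := by
  have hf : ∀ m, (wordSet m).Finite := wordSet_finite
  have h1 : (Set.image2 (· ++ ·) (wordSet (n + 2)) (wordSet (n + 1))).ncard =
      (wordSet (n + 2)).ncard * (wordSet (n + 1)).ncard :=
    ncard_image2_append (Nat.fib (n + 2)) (hf _) (hf _) (wordSet_length _)
  have h2 : (Set.image2 (· ++ ·) (wordSet (n + 1)) (wordSet (n + 2))).ncard =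
      (wordSet (n + 1)).ncard * (wordSet (n + 2)).ncard :=
    ncard_image2_append (Nat.fib (n + 1)) (hf _) (hf _) (wordSet_length _)
  have h3 : (Set.image2 (· ++ ·) (wordSet (n + 1))
      (Set.image2 (· ++ ·) (wordSet n) (wordSet (n + 1)))).ncard =
      (wordSet (n + 1)).ncard * ((wordSet n).ncard * (wordSet (n + 1)).ncard) := by
    rw [ncard_image2_append (Nat.fib (n + 1)) (hf _)
      (Set.Finite.image2 _ (hf _) (hf _)) (wordSet_length _),
      ncard_image2_append (Nat.fib n) (hf _) (hf _) (wordSet_length _)]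
  have key := Set.ncard_union_add_ncard_inter
    (Set.image2 (· ++ ·) (wordSet (n + 2)) (wordSet (n + 1)))
    (Set.image2 (· ++ ·) (wordSet (n + 1)) (wordSet (n + 2)))
    (Set.Finite.image2 _ (hf _) (hf _)) (Set.Finite.image2 _ (hf _) (hf _))
  rw [wordSet_inter, h1, h2, h3] at key
  have hws : wordSet (n + 3) =
      Set.image2 (· ++ ·) (wordSet (n + 2)) (wordSet (n + 1)) ∪
      Set.image2 (· ++ ·) (wordSet (n + 1)) (wordSet (n + 2)) := rfl
  rw [hws, key]
  ring

/-- Main recurrence, in shifted form. -/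
lemma main_aux : ∀ m : ℕ, (m + 1) * (wordSet (m + 3)).ncard =
    (m + 2) * (wordSet (m + 2)).ncard * (wordSet (m + 1)).ncard := by
  intro m
  induction m with
  | zero =>
    have h := wordSet_ncard_rec 0
    have h0 : (wordSet 0).ncard = 0 := by simp [wordSet]
    have h1 : (wordSet 1).ncard = 1 := by
      show ({[false]} : Set (List Bool)).ncard = 1
      simp
    have h2 : (wordSet 2).ncard = 1 := by
      show ({[true]} : Set (List Bool)).ncard = 1
      simp
    rw [h0, h1, h2] at h
    simpa [h1, h2] using h
  | succ m ih =>
    have h := wordSet_ncard_rec (m + 1)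
    set a1 := (wordSet (m + 1)).ncard
    set a2 := (wordSet (m + 2)).ncard
    set a3 := (wordSet (m + 3)).ncard
    set a4 := (wordSet (m + 4)).ncard
    -- h : a4 + a2 * (a1 * a2) = 2 * (a3 * a2)
    -- ih : (m+1) * a3 = (m+2) * a2 * a1
    -- goal : (m+2) * a4 = (m+3) * a3 * a2
    have step : (m + 2) * a4 + (m + 1) * (a3 * a2) =
        (m + 3) * (a3 * a2) + (m + 1) * (a3 * a2) := by
      calc (m + 2) * a4 + (m + 1) * (a3 * a2)
          = (m + 2) * a4 + a2 * ((m + 2) * a2 * a1) := by rw [← ih]; ring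
        _ = (m + 2) * (a4 + a2 * (a1 * a2)) := by ring
        _ = (m + 2) * (2 * (a3 * a2)) := by rw [h]
        _ = (m + 3) * (a3 * a2) + (m + 1) * (a3 * a2) := by ring
    have h4 := Nat.add_right_cancel step
    rw [h4]; ring

theorem stmt4 (n : ℕ) (hn : 3 ≤ n) :
    (n - 2) * (wordSet n).ncard =
      (n - 1) * (wordSet (n - 1)).ncard * (wordSet (n - 2)).ncard := by
  obtain ⟨m, rfl⟩ : ∃ m, n = m + 3 := ⟨n - 3, by omega⟩
  have h1 : m + 3 - 2 = m + 1 := rfl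
  have h2 : m + 3 - 1 = m + 2 := rfl
  rw [h1, h2]
  exact main_aux m
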